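/- For any language L over alphabet Σ, if the empty string ε is not in L, then (complement of L⁺)⁺ = (complement of L*)*; and if ε is in L, then (complement of L*)* = (complement of L⁺)⁺ ∪ {ε}. -/

import Mathlib

open scoped Computability

/-- The positive Kleene closure `L⁺` of a language: one or more concatenations
of words of `L`. -/
def Language.plus {α : Type*} (L : Language α) : Language α := L * L∗

private lemma plus_of_nil_mem {α : Type*} {M : Language α} (h : [] ∈ M) :
    M.plus = M∗ := by
  apply le_antisymm mul_kstar_le_kstar
  have h1 : (1 : Language α) ≤ M := by
    intro x hx
    rw [(Language.mem_one x).mp hx]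
    exact h
  calc M∗ = 1 * M∗ := (one_mul _).symm
    _ ≤ M * M∗ := mul_le_mul_left h1 _

private lemma add_one_kstar' {α : Type*} (M : Language α) : (M + 1)∗ = M∗ := by
  apply le_antisymm
  · apply kstar_le_of_mul_le_left one_le_kstar
    calc M∗ * (M + 1) = M∗ * M + M∗ := by rw [mul_add, mul_one]
      _ ≤ M∗ + M∗ := add_le_add kstar_mul_le_kstar le_rfl
      _ = M∗ := by simp [add_eq_sup]
  · exact kstar_mono le_self_add

theorem star_complement_star_eq_plus_complement_plus {α : Type*} (L : Language α) :
    ([] ∉ L → ((L.plus)ᶜ).plus = ((L∗)ᶜ)∗) ∧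
    ([] ∈ L → ((L∗)ᶜ)∗ = ((L.plus)ᶜ).plus + 1) := by
  constructor
  · intro hL
    have hnil : [] ∉ L.plus := by
      rw [Language.plus, Language.mem_mul]
      rintro ⟨a, ha, b, hb, hab⟩
      rcases List.append_eq_nil_iff.mp hab with ⟨rfl, rfl⟩
      exact hL ha
    have hcompl : (L.plus)ᶜ = (L∗)ᶜ + 1 := by
      ext x
      by_cases hx : x = []
      · subst hx
        rw [(show ∀ (y : List α) (s : Language α), y ∈ sᶜ ↔ y ∉ s from fun _ _ => Iff.rfl), Language.mem_add]
        simp [hnil, Language.nil_mem_one]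
      · have hx' : x ∈ L.plus ↔ x ∈ L∗ := by
          rw [← Language.one_add_self_mul_kstar_eq_kstar L, Language.mem_add]
          exact ⟨Or.inr, fun h =>
            h.resolve_left fun h1 => hx ((Language.mem_one x).mp h1)⟩
        rw [(show ∀ (y : List α) (s : Language α), y ∈ sᶜ ↔ y ∉ s from fun _ _ => Iff.rfl), Language.mem_add, (show ∀ (y : List α) (s : Language α), y ∈ sᶜ ↔ y ∉ s from fun _ _ => Iff.rfl)]
        simp [Language.mem_one, hx, hx']
      -- done
    rw [hcompl, plus_of_nil_mem (by rw [Language.mem_add]; exact Or.inr Language.nil_mem_one),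
      add_one_kstar']
  · intro hL
    have h1 : L.plus = L∗ := plus_of_nil_mem hL
    rw [h1]
    conv_lhs => rw [← Language.one_add_self_mul_kstar_eq_kstar ((L∗)ᶜ)]
    rw [add_comm]
    rfl
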